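/- The 'adding a trunk neuron' map is monomial: for a code C ⊆ F₂ⁿ and α ⊆ {1,...,n}, the map atn : C → F₂^{n+1} sending w to w1 if w ∈ Tk_α(C) and to w0 otherwise, considered as a map onto its image D, satisfies atn⁻¹(Tk_i(D)) = Tk_i(C) for i ≤ n and atn⁻¹(Tk_{n+1}(D)) = Tk_α(C); in particular atn is a monomial map. -/
import Mathlib


open scoped Classical

/-- The trunk of a code `C`, as a subset of `C`, determined by `α`. -/
def trunkIn {n : ℕ} (C : Set (Fin n → ZMod 2)) (α : Set (Fin n)) : Set ↥C :=
  {w : ↥C | ∀ i ∈ α, w.1 i = 1}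

/-- A code map `q : C → D` is monomial if the preimage of every simple trunk of
`D` is a trunk of `C` or empty. -/
def IsMonomialMap {n m : ℕ} {C : Set (Fin n → ZMod 2)} {D : Set (Fin m → ZMod 2)}
    (q : ↥C → ↥D) : Prop :=
  ∀ j : Fin m,
    (∃ α : Set (Fin n), q ⁻¹' trunkIn D {j} = trunkIn C α) ∨
    q ⁻¹' trunkIn D {j} = ∅

/-- The ambient "adding a trunk neuron" map: append `1` if `w ∈ Tk_α(C)`,
else append `0`. -/
noncomputable def atnFun {n : ℕ} (α : Set (Fin n)) (w : Fin n → ZMod 2) :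
    Fin (n + 1) → ZMod 2 :=
  Fin.snoc w (if ∀ i ∈ α, w i = 1 then 1 else 0)

/-- The "adding a trunk neuron" code map `atn : C → D = atn(C)`. -/
noncomputable def atn {n : ℕ} (C : Set (Fin n → ZMod 2)) (α : Set (Fin n)) :
    ↥C → ↥(atnFun α '' C) :=
  fun w => ⟨atnFun α w.1, ⟨w.1, w.2, rfl⟩⟩

/-- For the map `atn : C → D` adding a trunk neuron, the preimage
of the `i`-th simple trunk of `D` is the `i`-th simple trunk of `C` for `i ≤ n`,
the preimage of the `(n+1)`-st simple trunk of `D` is `Tk_α(C)`, and in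
particular `atn` is a monomial map. -/
theorem stmt_15 {n : ℕ} (C : Set (Fin n → ZMod 2)) (α : Set (Fin n)) :
    (∀ i : Fin n,
      atn C α ⁻¹' trunkIn (atnFun α '' C) {Fin.castSucc i} = trunkIn C {i}) ∧
    atn C α ⁻¹' trunkIn (atnFun α '' C) {Fin.last n} = trunkIn C α ∧
    IsMonomialMap (atn C α) := by
  have h1 : ∀ i : Fin n,
      atn C α ⁻¹' trunkIn (atnFun α '' C) {Fin.castSucc i} = trunkIn C {i} := by
    intro i
    ext w
    simp only [Set.mem_preimage, trunkIn, Set.mem_setOf_eq, Set.mem_singleton_iff,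
      forall_eq, atn, atnFun, Fin.snoc_castSucc]
  have h2 : atn C α ⁻¹' trunkIn (atnFun α '' C) {Fin.last n} = trunkIn C α := by
    ext w
    simp only [Set.mem_preimage, trunkIn, Set.mem_setOf_eq, Set.mem_singleton_iff,
      forall_eq, atn, atnFun, Fin.snoc_last]
    split
    · next h => simpa using h
    · next h =>
      constructor
      · intro h0; exact absurd h0 (by decide)
      · intro hw; exact absurd hw h
  refine ⟨h1, h2, ?_⟩
  intro j
  left
  induction j using Fin.lastCases with
  | last => exact ⟨α, h2⟩
  | cast i => exact ⟨{i}, h1 i⟩
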